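/- Let m, γ, k₁, k₂ be real numbers with m > 0, γ > 0, k₁ > 0, k₂ > 0, let f be a real constant, and let e, v, f̂ : ℝ → ℝ be functions such that for every t: e has derivative v(t) at t, v has derivative −(1 + k₁k₂)·e(t) − (k₁ + k₂)·v(t) + (f − f̂(t))/m at t, and f̂ has derivative γ·m·(k₁·e(t) + v(t)) at t. Then e(t) → 0, v(t) → 0, and f̂(t) → f as t → ∞. -/

import Mathlib

open Filter

private lemma tendsto_zero_of_sq_tendsto_zero {u : ℝ → ℝ}
    (h : Tendsto (fun t => (u t)^2) atTop (nhds 0)) :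
    Tendsto u atTop (nhds 0) := by
  have h1 : Tendsto (fun t => |u t|) atTop (nhds 0) := by
    have h2 := (Real.continuous_sqrt.tendsto 0).comp h
    simpa only [Function.comp_def, Real.sqrt_sq_eq_abs, Real.sqrt_zero] using h2
  have hneg : Tendsto (fun t => -|u t|) atTop (nhds 0) := by
    simpa using h1.neg
  exact tendsto_of_tendsto_of_tendsto_of_le_of_le hneg h1
    (fun t => neg_abs_le _) (fun t => le_abs_self _)

set_option maxHeartbeats 2000000 in
theorem inner_loop_single_channel_adaptive_convergence
    (m γ k₁ k₂ : ℝ) (hm : 0 < m) (hγ : 0 < γ) (hk₁ : 0 < k₁) (hk₂ : 0 < k₂)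
    (f : ℝ)
    (e v fhat : ℝ → ℝ)
    (he : ∀ t, HasDerivAt e (v t) t)
    (hv : ∀ t, HasDerivAt v
        (-(1 + k₁ * k₂) * e t - (k₁ + k₂) * v t + (f - fhat t) / m) t)
    (hfhat : ∀ t, HasDerivAt fhat (γ * m * (k₁ * e t + v t)) t) :
    Tendsto e atTop (nhds 0) ∧ Tendsto v atTop (nhds 0) ∧
      Tendsto fhat atTop (nhds f) := by
  -- change of variables
  set s : ℝ → ℝ := fun t => v t + k₁ * e t with hs_def
  set φ : ℝ → ℝ := fun t => (f - fhat t) / m with hφ_def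
  have hm' : m ≠ 0 := ne_of_gt hm
  have hγ' : γ ≠ 0 := ne_of_gt hγ
  -- derivatives of s and φ
  have hs : ∀ t, HasDerivAt s (-(e t) - k₂ * s t + φ t) t := by
    intro t
    have h := (hv t).add ((he t).const_mul k₁)
    refine h.congr_deriv ?_
    simp only [hs_def, hφ_def]
    ring
  have hφ : ∀ t, HasDerivAt φ (-(γ * s t)) t := by
    intro t
    have h := ((hfhat t).const_sub f).div_const m
    refine h.congr_deriv ?_
    field_simp [hs_def]
    ring
  -- choice of the small coupling constant α
  obtain ⟨α, hα, hα1, hα2, hα3, hα4⟩ :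
      ∃ α : ℝ, 0 < α ∧ α ≤ 1 ∧ α * γ ≤ 1 ∧ α * γ ≤ k₂ / 2 ∧
        α * (1 / (4 * k₁) + k₂ / 4) ≤ 1 / 2 := by
    set M : ℝ := 1 / (4 * k₁) + k₂ / 4 with hM_def
    have hM : 0 < M := by positivity
    refine ⟨min (min 1 (1 / γ)) (min (k₂ / (2 * γ)) (1 / (2 * M))), ?_, ?_, ?_, ?_, ?_⟩
    · exact lt_min (lt_min one_pos (by positivity)) (lt_min (by positivity) (by positivity))
    · exact le_trans (min_le_left _ _) (min_le_left _ _)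
    · have h : min (min 1 (1/γ)) (min (k₂/(2*γ)) (1/(2*M))) ≤ 1 / γ :=
        le_trans (min_le_left _ _) (min_le_right _ _)
      rw [le_div_iff₀ hγ] at h
      linarith
    · have h : min (min 1 (1/γ)) (min (k₂/(2*γ)) (1/(2*M))) ≤ k₂ / (2 * γ) :=
        le_trans (min_le_right _ _) (min_le_left _ _)
      rw [le_div_iff₀ (by positivity)] at h
      linarith
    · have h : min (min 1 (1/γ)) (min (k₂/(2*γ)) (1/(2*M))) ≤ 1 / (2 * M) :=
        le_trans (min_le_right _ _) (min_le_right _ _)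
      rw [le_div_iff₀ (by positivity)] at h
      linarith
  -- choice of the decay rate c
  obtain ⟨c, hc, hc1, hc2, hc3⟩ :
      ∃ c : ℝ, 0 < c ∧ c ≤ k₁ ∧ c ≤ k₂ / 3 ∧ c * (2 / γ + 1) ≤ α := by
    have hpos : (0:ℝ) < 2 / γ + 1 := by positivity
    refine ⟨min k₁ (min (k₂ / 3) (α / (2 / γ + 1))), ?_, min_le_left _ _,
      le_trans (min_le_right _ _) (min_le_left _ _), ?_⟩
    · exact lt_min hk₁ (lt_min (by positivity) (by positivity))
    · have h : min k₁ (min (k₂/3) (α / (2/γ+1))) ≤ α / (2 / γ + 1) :=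
        le_trans (min_le_right _ _) (min_le_right _ _)
      rw [le_div_iff₀ hpos] at h
      linarith
  -- Lyapunov function
  set W : ℝ → ℝ := fun t => (e t)^2 + (s t)^2 + (φ t)^2 / γ - α * (s t * φ t)
    with hW_def
  -- key pointwise bounds (pure algebra)
  have keyW_nonneg : ∀ E S P : ℝ,
      0 ≤ E^2 + S^2 + P^2 / γ - α * (S * P) := by
    intro E S P
    have h1 : α * (S * P) ≤ (α / 2) * S^2 + (α / 2) * P^2 := by nlinarith [sq_nonneg (S - P)]
    have h2 : (α / 2) * S^2 ≤ (1/2) * S^2 := by nlinarith [sq_nonneg S]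
    have h3 : (α / 2) * P^2 ≤ P^2 / γ := by
      rw [le_div_iff₀ hγ]; nlinarith [sq_nonneg P]
    nlinarith [sq_nonneg E, sq_nonneg S]
  have keyE : ∀ E S P : ℝ, E^2 ≤ E^2 + S^2 + P^2 / γ - α * (S * P) := by
    intro E S P
    have := keyW_nonneg 0 S P
    nlinarith
  have keyS : ∀ E S P : ℝ, S^2 ≤ 2 * (E^2 + S^2 + P^2 / γ - α * (S * P)) := by
    intro E S P
    have h1 : α * (S * P) ≤ (α / 2) * S^2 + (α / 2) * P^2 := by nlinarith [sq_nonneg (S - P)]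
    have h3 : (α / 2) * P^2 ≤ P^2 / γ := by
      rw [le_div_iff₀ hγ]; nlinarith [sq_nonneg P]
    nlinarith [sq_nonneg E, sq_nonneg S]
  have keyP : ∀ E S P : ℝ, P^2 ≤ 2 * γ * (E^2 + S^2 + P^2 / γ - α * (S * P)) := by
    intro E S P
    have h1 : α * (S * P) ≤ (α / 2) * (γ * S^2 + P^2 / γ) := by
      have hid : (γ * S^2 + P^2 / γ - 2 * (S * P)) * γ = (γ * S - P)^2 := by
        field_simp; ring
      nlinarith [hid ▸ sq_nonneg (γ * S - P), hγ, hα]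
    have h2 : 2 * γ * (α * (S * P)) ≤ α * γ^2 * S^2 + α * (γ * (P^2 / γ)) := by
      nlinarith [h1, hγ]
    have h3 : γ * (P^2 / γ) = P^2 := by field_simp
    rw [h3] at h2
    nlinarith [sq_nonneg E, mul_nonneg hγ.le (sq_nonneg E),
      mul_nonneg (mul_nonneg (sub_nonneg.mpr hα2) hγ.le) (sq_nonneg S),
      mul_nonneg (sub_nonneg.mpr hα1) (sq_nonneg P), h3]
  -- the main Lyapunov decay inequality
  have keyDecay : ∀ E S P : ℝ,
      (-2*k₁*E^2 - 2*k₂*S^2 + α*(E*P) + α*k₂*(S*P) - α*P^2 + α*γ*S^2)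
        + c * (E^2 + S^2 + P^2 / γ - α * (S * P)) ≤ 0 := by
    intro E S P
    have h4k : (0:ℝ) < 4 * k₁ := by positivity
    have hEP : α * (E * P) ≤ k₁ * E^2 + (α^2 / (4*k₁)) * P^2 := by
      rw [← sub_nonneg]
      have hid : (k₁ * E^2 + (α^2 / (4*k₁)) * P^2 - α * (E * P)) * (4 * k₁)
          = (2*k₁*E - α*P)^2 := by field_simp; ring
      nlinarith [hid ▸ sq_nonneg (2*k₁*E - α*P)]
    have hSP : α * k₂ * (S * P) ≤ k₂ * S^2 + (k₂ * α^2 / 4) * P^2 := by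
      nlinarith [mul_nonneg hk₂.le (sq_nonneg (2*S - α*P))]
    have hPcoef : (α^2 / (4*k₁)) + (k₂ * α^2 / 4) ≤ (α/2) := by
      have hid : α^2 / (4*k₁) + k₂ * α^2 / 4 = α * (α * (1/(4*k₁) + k₂/4)) := by
        field_simp
      rw [hid]
      nlinarith
    have hSS : α * γ * S^2 ≤ (k₂/2) * S^2 := by nlinarith [sq_nonneg S]
    -- bound for c * W
    have hWub : c * (E^2 + S^2 + P^2 / γ - α * (S * P))
        ≤ k₁ * E^2 + (k₂/2) * S^2 + (α/2) * P^2 := by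
      have h1 : - (α * (S * P)) ≤ (1/2) * S^2 + (1/2) * P^2 := by
        nlinarith [sq_nonneg (S + P), sq_nonneg S, sq_nonneg P]
      have hPg : P^2 / γ = (1/γ) * P^2 := by ring
      have h2 : E^2 + S^2 + P^2 / γ - α * (S * P)
          ≤ E^2 + (3/2) * S^2 + (1/γ + 1/2) * P^2 := by
        rw [hPg]; linarith
      have h3 : c * (E^2 + S^2 + P^2 / γ - α * (S * P))
          ≤ c * (E^2 + (3/2) * S^2 + (1/γ + 1/2) * P^2) := by nlinarith
      have h4 : c * E^2 ≤ k₁ * E^2 := by nlinarith [sq_nonneg E]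
      have h5 : c * ((3/2) * S^2) ≤ (k₂/2) * S^2 := by nlinarith [sq_nonneg S]
      have h6 : c * ((1/γ + 1/2) * P^2) ≤ (α/2) * P^2 := by
        have hcγ : c * (1/γ + 1/2) ≤ α/2 := by
          have hhalf : c * (1/γ + 1/2) = (c * (2/γ + 1)) / 2 := by ring
          rw [hhalf]; linarith [hc3]
        nlinarith [sq_nonneg P]
      nlinarith
    nlinarith [sq_nonneg P, mul_nonneg (sq_nonneg P) (sub_nonneg.mpr hPcoef)]
  -- derivative of W
  have hW : ∀ t, HasDerivAt W
      (-2*k₁*(e t)^2 - 2*k₂*(s t)^2 + α*(e t * φ t) + α*k₂*(s t * φ t)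
        - α*(φ t)^2 + α*γ*(s t)^2) t := by
    intro t
    have h1 : HasDerivAt (fun t => (e t)^2) (2 * e t * v t) t := by
      simpa using ((he t).fun_pow 2)
    have h2 : HasDerivAt (fun t => (s t)^2)
        (2 * s t * (-(e t) - k₂ * s t + φ t)) t := by
      simpa using ((hs t).fun_pow 2)
    have h3 : HasDerivAt (fun t => (φ t)^2 / γ)
        ((2 * φ t * (-(γ * s t))) / γ) t := by
      simpa using (((hφ t).pow 2).div_const γ)
    have h4 : HasDerivAt (fun t => α * (s t * φ t))
        (α * ((-(e t) - k₂ * s t + φ t) * φ t + s t * (-(γ * s t)))) t :=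
      ((hs t).mul (hφ t)).const_mul α
    have h := ((h1.add h2).add h3).sub h4
    refine h.congr_deriv ?_
    field_simp
    ring
  -- g t = W t * exp (c t) is antitone
  set g : ℝ → ℝ := fun t => W t * Real.exp (c * t) with hg_def
  have hg : ∀ t, HasDerivAt g
      (((-2*k₁*(e t)^2 - 2*k₂*(s t)^2 + α*(e t * φ t) + α*k₂*(s t * φ t)
        - α*(φ t)^2 + α*γ*(s t)^2) + c * W t) * Real.exp (c * t)) t := by
    intro t
    have hexp : HasDerivAt (fun t => Real.exp (c * t)) (c * Real.exp (c * t)) t := by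
      simpa [mul_comm, Function.comp_def] using (Real.hasDerivAt_exp (c * t)).comp t
        ((hasDerivAt_id t).const_mul c)
    have h := (hW t).mul hexp
    refine h.congr_deriv ?_
    ring
  have hg_anti : Antitone g := by
    have hdiff : Differentiable ℝ g := fun t => (hg t).differentiableAt
    apply antitone_of_deriv_nonpos hdiff
    intro t
    rw [(hg t).deriv]
    apply mul_nonpos_of_nonpos_of_nonneg
    · exact keyDecay (e t) (s t) (φ t)
    · exact (Real.exp_pos _).le
  -- W t ≤ W 0 * exp (-c t) for t ≥ 0
  have hWbound : ∀ t ≥ (0:ℝ), W t ≤ W 0 * Real.exp (-(c * t)) := by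
    intro t ht
    have h := hg_anti ht
    simp only [hg_def, mul_zero, Real.exp_zero, mul_one] at h
    have hid : W t = (W t * Real.exp (c * t)) * Real.exp (-(c * t)) := by
      rw [mul_assoc, ← Real.exp_add]; simp
    rw [hid]
    exact mul_le_mul_of_nonneg_right h (Real.exp_pos _).le
  have hWpos : ∀ t, 0 ≤ W t := fun t => keyW_nonneg (e t) (s t) (φ t)
  -- W → 0
  have hWlim : Tendsto W atTop (nhds 0) := by
    have hct : Tendsto (fun t : ℝ => c * t) atTop atTop :=
      Tendsto.const_mul_atTop hc tendsto_id
    have hexp : Tendsto (fun t : ℝ => Real.exp (-(c * t))) atTop (nhds 0) := by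
      have := Real.tendsto_exp_neg_atTop_nhds_zero.comp hct
      simpa [Function.comp_def] using this
    have hbound : Tendsto (fun t => W 0 * Real.exp (-(c * t))) atTop (nhds 0) := by
      simpa using hexp.const_mul (W 0)
    apply tendsto_of_tendsto_of_tendsto_of_le_of_le' tendsto_const_nhds hbound
    · exact Eventually.of_forall hWpos
    · filter_upwards [eventually_ge_atTop (0:ℝ)] with t ht using hWbound t ht
  -- squared quantities → 0
  have hE2 : Tendsto (fun t => (e t)^2) atTop (nhds 0) := by
    apply tendsto_of_tendsto_of_tendsto_of_le_of_le tendsto_const_nhds hWlim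
    · exact fun t => sq_nonneg _
    · exact fun t => keyE (e t) (s t) (φ t)
  have hS2 : Tendsto (fun t => (s t)^2) atTop (nhds 0) := by
    have h2 : Tendsto (fun t => 2 * W t) atTop (nhds 0) := by
      simpa using hWlim.const_mul 2
    apply tendsto_of_tendsto_of_tendsto_of_le_of_le tendsto_const_nhds h2
    · exact fun t => sq_nonneg _
    · exact fun t => keyS (e t) (s t) (φ t)
  have hP2 : Tendsto (fun t => (φ t)^2) atTop (nhds 0) := by
    have h2 : Tendsto (fun t => 2 * γ * W t) atTop (nhds 0) := by
      simpa using hWlim.const_mul (2 * γ)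
    apply tendsto_of_tendsto_of_tendsto_of_le_of_le tendsto_const_nhds h2
    · exact fun t => sq_nonneg _
    · exact fun t => keyP (e t) (s t) (φ t)
  have hE : Tendsto e atTop (nhds 0) := tendsto_zero_of_sq_tendsto_zero hE2
  have hS : Tendsto s atTop (nhds 0) := tendsto_zero_of_sq_tendsto_zero hS2
  have hP : Tendsto φ atTop (nhds 0) := tendsto_zero_of_sq_tendsto_zero hP2
  refine ⟨hE, ?_, ?_⟩
  · have h1 : Tendsto (fun t => s t - k₁ * e t) atTop (nhds (0 - k₁ * 0)) :=
      hS.sub (hE.const_mul k₁)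
    have h2 : ∀ t, s t - k₁ * e t = v t := by intro t; simp [hs_def]
    simp only [mul_zero, sub_zero] at h1
    simpa [h2] using h1
  · have h1 : Tendsto (fun t => f - m * φ t) atTop (nhds (f - m * 0)) :=
      tendsto_const_nhds.sub (hP.const_mul m)
    have h2 : ∀ t, f - m * φ t = fhat t := by
      intro t; simp only [hφ_def]; field_simp; ring
    simp only [mul_zero, sub_zero] at h1
    simpa [h2] using h1
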